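/- Let T > 0 and let g : ℝ → ℝ be continuous on [0,T] and extended to all of ℝ by setting g(t) = g(0) for t < 0 and g(t) = g(T) for t > T. Fix δ ∈ (0,T) and suppose there exist an integrable function ρ ∈ L¹((0, T−δ); ℝ) and a constant h₀ > 0 such that for almost every t ∈ [0, T−δ) and every h ∈ (0, h₀], (g(t+h) − g(t))/h ≤ ρ(t). Then the extended-real-valued function D⁺g(t) := limsup_{h→0⁺} (g(t+h) − g(t))/h is bounded above by ρ(t) for almost every t ∈ [0, T−δ), and for all 0 ≤ α < β ≤ T−δ one has g(β) − g(α) ≤ ∫_α^β D⁺g(t) dt, where the integral is the (upper) Lebesgue integral of D⁺g, well defined with values in [−∞, +∞). -/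

import Mathlib

open Filter Topology MeasureTheory Set

/-- The one-sided upper Dini-type derivative `D⁺g(t) = limsup_{h→0⁺} (g(t+h)-g(t))/h`,
taking values in the extended reals. -/
noncomputable def upperRightDini (g : ℝ → ℝ) (t : ℝ) : EReal :=
  Filter.limsup (fun h : ℝ => (((g (t + h) - g t) / h : ℝ) : EReal)) (𝓝[>] (0 : ℝ))

/-- The upper Lebesgue integral (over the set `s`) of an extended-real-valued function `f`:
the infimum of the integrals of integrable real-valued functions dominating `f` a.e. on `s`. -/
noncomputable def upperIntegral (f : ℝ → EReal) (s : Set ℝ) : EReal :=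
  sInf {I : EReal | ∃ φ : ℝ → ℝ, MeasureTheory.IntegrableOn φ s ∧
    (∀ᵐ t ∂(MeasureTheory.volume.restrict s), f t ≤ ((φ t : ℝ) : EReal)) ∧
    I = ((∫ t in s, φ t : ℝ) : EReal)}

/-- A function continuous on `[0,T]`, constant to the left of `0` and to the right of `T`,
is globally continuous. -/
lemma continuous_of_clamp {T : ℝ} (hT : 0 ≤ T) {g : ℝ → ℝ}
    (hg : ContinuousOn g (Set.Icc 0 T))
    (hg0 : ∀ t : ℝ, t < 0 → g t = g 0) (hgT : ∀ t : ℝ, T < t → g t = g T) :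
    Continuous g := by
  have hfun : g = g ∘ (fun t => max 0 (min t T)) := by
    funext t
    simp only [Function.comp_apply]
    rcases lt_or_ge t 0 with h | h
    · rw [min_eq_left (h.le.trans hT), max_eq_left h.le, hg0 t h]
    rcases le_or_gt t T with h2 | h2
    · rw [min_eq_left h2, max_eq_right h]
    · rw [min_eq_right h2.le, max_eq_right hT, hgT t h2]
  rw [hfun]
  exact hg.comp_continuous (continuous_const.max (continuous_id.min continuous_const))
    (fun x => ⟨le_max_left _ _, max_le hT (min_le_right _ _)⟩)

/-- Main analytic lemma: if the forward difference quotients of a continuous `g` are a.e.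
dominated by an integrable `ρ` for all small `h`, and `D⁺g ≤ φ` a.e. with `φ` integrable,
then `g β - g α ≤ ∫ φ`. -/
lemma key_lemma {α β h₀ : ℝ} (hαβ : α < β) (hh₀ : 0 < h₀) {g ρ φ : ℝ → ℝ}
    (hg : Continuous g)
    (hρ : IntegrableOn ρ (Ioc α β)) (hφ : IntegrableOn φ (Ioc α β))
    (hq : ∀ᵐ t ∂(volume.restrict (Ioc α β)),
      ∀ h : ℝ, 0 < h → h ≤ h₀ → (g (t + h) - g t) / h ≤ ρ t)
    (hD : ∀ᵐ t ∂(volume.restrict (Ioc α β)), upperRightDini g t ≤ ((φ t : ℝ) : EReal)) :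
    g β - g α ≤ ∫ t in Ioc α β, φ t := by
  set hn : ℕ → ℝ := fun n => h₀ / (n + 1) with hhn
  have hnpos : ∀ n, 0 < hn n := fun n => div_pos hh₀ (by positivity)
  have hnle : ∀ n, hn n ≤ h₀ := fun n =>
    div_le_self hh₀.le (by linarith [Nat.cast_nonneg (α := ℝ) n])
  have hn0 : Tendsto hn atTop (𝓝 0) := by
    have h := tendsto_one_div_add_atTop_nhds_zero_nat.const_mul h₀
    rw [mul_zero] at h
    simpa [hhn, mul_one_div, div_eq_mul_inv] using h
  have hnIoi : Tendsto hn atTop (𝓝[>] (0 : ℝ)) :=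
    tendsto_nhdsWithin_of_tendsto_nhds_of_eventually_within _ hn0
      (Eventually.of_forall fun n => hnpos n)
  set q : ℕ → ℝ → ℝ := fun n t => (g (t + hn n) - g t) / hn n with hq_def
  set r : ℕ → ℝ → ℝ := fun n t => max (q n t) (φ t) with hr_def
  have hqcont : ∀ n, Continuous (q n) :=
    fun n => ((hg.comp (continuous_id.add continuous_const)).sub hg).div_const _
  have hqint : ∀ n, IntegrableOn (q n) (Ioc α β) := fun n => (hqcont n).integrableOn_Ioc
  have hrint : ∀ n, IntegrableOn (r n) (Ioc α β) := fun n => (hqint n).sup hφ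
  -- limit of averaged integrals at a point
  have hslope : ∀ x : ℝ,
      Tendsto (fun n => (∫ t in x..(x + hn n), g t) / hn n) atTop (𝓝 (g x)) := by
    intro x
    have hF : HasDerivAt (fun u => ∫ t in x..u, g t) (g x) x :=
      intervalIntegral.integral_hasDerivAt_right (hg.intervalIntegrable x x)
        (hg.stronglyMeasurableAtFilter _ _) hg.continuousAt
    have h1 := hasDerivAt_iff_tendsto_slope.mp hF
    have h2 : Tendsto (fun n => x + hn n) atTop (𝓝[≠] x) := by
      apply tendsto_nhdsWithin_of_tendsto_nhds_of_eventually_within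
      · simpa using tendsto_const_nhds.add hn0
      · exact Eventually.of_forall fun n => by
          simp only [mem_compl_iff, mem_singleton_iff]
          have := hnpos n; intro hc; nlinarith [hnpos n]
    refine (h1.comp h2).congr fun n => ?_
    simp only [Function.comp_apply, slope_def_field, add_sub_cancel_left]
    congr 1
    rw [← intervalIntegral.integral_interval_sub_left (hg.intervalIntegrable x (x + hn n))
      (hg.intervalIntegrable x x), intervalIntegral.integral_same, sub_zero]
  -- value of the integrals of the difference quotients
  have hAint : ∀ n, ∫ t in Ioc α β, q n t =
      (∫ t in β..(β + hn n), g t) / hn n - (∫ t in α..(α + hn n), g t) / hn n := by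
    intro n
    have hgi : ∀ a b : ℝ, IntervalIntegrable g volume a b := fun a b => hg.intervalIntegrable a b
    have hadd1 := intervalIntegral.integral_add_adjacent_intervals
      (hgi (α + hn n) β) (hgi β (β + hn n))
    have hadd2 := intervalIntegral.integral_add_adjacent_intervals
      (hgi α (α + hn n)) (hgi (α + hn n) β)
    rw [← intervalIntegral.integral_of_le hαβ.le]
    have hmain : ∫ t in α..β, q n t =
        ((∫ t in (α + hn n)..(β + hn n), g t) - ∫ t in α..β, g t) / hn n := by
      simp only [hq_def]
      have hgs : IntervalIntegrable (fun t : ℝ => g (t + hn n)) volume α β :=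
        Continuous.intervalIntegrable (by fun_prop) α β
      rw [intervalIntegral.integral_div, intervalIntegral.integral_sub hgs (hgi α β),
        intervalIntegral.integral_comp_add_right]
    rw [hmain, ← hadd1, ← hadd2]
    ring
  have hqlim : Tendsto (fun n => ∫ t in Ioc α β, q n t) atTop (𝓝 (g β - g α)) :=
    (((hslope β).sub (hslope α)).congr fun n => (hAint n).symm)
  -- a.e. convergence of r n to φ
  have hrlim : ∀ᵐ t ∂(volume.restrict (Ioc α β)),
      Tendsto (fun n => r n t) atTop (𝓝 (φ t)) := by
    filter_upwards [hD] with t ht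
    rw [upperRightDini] at ht
    rw [Metric.tendsto_atTop]
    intro ε hε
    have h1 : Filter.limsup (fun h : ℝ => (((g (t + h) - g t) / h : ℝ) : EReal)) (𝓝[>] (0 : ℝ))
        < ((φ t + ε / 2 : ℝ) : EReal) :=
      lt_of_le_of_lt ht (by exact_mod_cast (by linarith : φ t < φ t + ε / 2))
    have h2 := eventually_lt_of_limsup_lt h1
    have h3 : ∀ᶠ n in atTop, (g (t + hn n) - g t) / hn n < φ t + ε / 2 := by
      filter_upwards [hnIoi.eventually h2] with n hn2
      exact_mod_cast hn2
    obtain ⟨N, hN⟩ := Filter.eventually_atTop.mp h3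
    refine ⟨N, fun n hn' => ?_⟩
    have hq' := hN n hn'
    have hr1 : φ t ≤ r n t := le_max_right _ _
    have hr2 : r n t < φ t + ε / 2 := max_lt hq' (by linarith)
    rw [Real.dist_eq, abs_sub_lt_iff]
    constructor <;> linarith
  -- dominated convergence
  have hbound_int : Integrable (fun t => |ρ t| + |φ t|) (volume.restrict (Ioc α β)) :=
    hρ.abs.add hφ.abs
  have hrmeas : ∀ n, AEStronglyMeasurable (r n) (volume.restrict (Ioc α β)) :=
    fun n => (hqcont n).aestronglyMeasurable.sup hφ.aestronglyMeasurable
  have hrbdd : ∀ n, ∀ᵐ t ∂(volume.restrict (Ioc α β)), ‖r n t‖ ≤ |ρ t| + |φ t| := by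
    intro n
    filter_upwards [hq] with t ht
    have h1 : q n t ≤ ρ t := ht (hn n) (hnpos n) (hnle n)
    have hρa := le_abs_self (ρ t); have hφa := le_abs_self (φ t)
    have hφb := neg_abs_le (φ t); have hρb := neg_abs_le (ρ t)
    have hub : r n t ≤ |ρ t| + |φ t| := max_le (by linarith) (by linarith)
    have hlb : -(|ρ t| + |φ t|) ≤ r n t :=
      le_trans (by linarith) (le_max_right (q n t) (φ t))
    rw [Real.norm_eq_abs, abs_le]
    exact ⟨hlb, hub⟩
  have hrtend : Tendsto (fun n => ∫ t in Ioc α β, r n t) atTop (𝓝 (∫ t in Ioc α β, φ t)) :=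
    tendsto_integral_of_dominated_convergence _ hrmeas hbound_int hrbdd hrlim
  have hle : ∀ n, ∫ t in Ioc α β, q n t ≤ ∫ t in Ioc α β, r n t := fun n =>
    integral_mono_ae (hqint n) (hrint n) (Eventually.of_forall fun t => le_max_left _ _)
  exact le_of_tendsto_of_tendsto' hqlim hrtend hle

/-- Transfer of an a.e. statement from `[0,c)` to `(α,β] ⊆ [0,c]`. -/
lemma ae_transfer {c α β : ℝ} (hα : 0 ≤ α) (hβ : β ≤ c) {p : ℝ → Prop}
    (h : ∀ᵐ t ∂(volume.restrict (Ico 0 c)), p t) :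
    ∀ᵐ t ∂(volume.restrict (Ioc α β)), p t := by
  rw [ae_restrict_iff' measurableSet_Ico] at h
  rw [ae_restrict_iff' measurableSet_Ioc]
  have ha : ∀ᵐ t : ℝ ∂volume, t ≠ c := by
    have hc : (volume : Measure ℝ) {c} = 0 := measure_singleton c
    rw [ae_iff]
    convert hc using 2
    ext x; simp
  filter_upwards [h, ha] with t ht htne
  intro hmem
  exact ht ⟨hα.trans hmem.1.le, lt_of_le_of_ne (hmem.2.trans hβ) htne⟩

theorem stmt0 (T δ h₀ : ℝ) (hT : 0 < T) (hδ : δ ∈ Set.Ioo 0 T) (hh₀ : 0 < h₀)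
    (g ρ : ℝ → ℝ)
    (hg : ContinuousOn g (Set.Icc 0 T))
    (hg0 : ∀ t : ℝ, t < 0 → g t = g 0) (hgT : ∀ t : ℝ, T < t → g t = g T)
    (hρ : MeasureTheory.IntegrableOn ρ (Set.Ioo 0 (T - δ)))
    (hbound : ∀ᵐ t ∂(MeasureTheory.volume.restrict (Set.Ico 0 (T - δ))),
      ∀ h : ℝ, 0 < h → h ≤ h₀ → (g (t + h) - g t) / h ≤ ρ t) :
    (∀ᵐ t ∂(MeasureTheory.volume.restrict (Set.Ico 0 (T - δ))),
        upperRightDini g t ≤ ((ρ t : ℝ) : EReal)) ∧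
    (∀ α β : ℝ, 0 ≤ α → α < β → β ≤ T - δ →
      ((g β - g α : ℝ) : EReal) ≤ upperIntegral (upperRightDini g) (Set.Ioc α β)) := by
  have hgc : Continuous g := continuous_of_clamp hT.le hg hg0 hgT
  have hDini : ∀ᵐ t ∂(MeasureTheory.volume.restrict (Set.Ico 0 (T - δ))),
      upperRightDini g t ≤ ((ρ t : ℝ) : EReal) := by
    filter_upwards [hbound] with t ht
    rw [upperRightDini]
    refine Filter.limsup_le_of_le (by isBoundedDefault) ?_
    filter_upwards [Ioo_mem_nhdsGT_of_mem (⟨le_refl (0 : ℝ), hh₀⟩ : (0 : ℝ) ∈ Ico 0 h₀)]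
      with h hh
    exact_mod_cast ht h hh.1 hh.2.le
  refine ⟨hDini, fun α β hα hαβ hβ => ?_⟩
  rw [upperIntegral]
  apply le_sInf
  rintro I ⟨φ, hφint, hφdom, rfl⟩
  have hρ' : IntegrableOn ρ (Ioc α β) :=
    (integrableOn_Ioc_iff_integrableOn_Ioo).mpr (hρ.mono_set (Ioo_subset_Ioo hα hβ))
  have hq' : ∀ᵐ t ∂(volume.restrict (Ioc α β)),
      ∀ h : ℝ, 0 < h → h ≤ h₀ → (g (t + h) - g t) / h ≤ ρ t :=
    ae_transfer hα hβ hbound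
  exact_mod_cast key_lemma hαβ hh₀ hgc hρ' hφint hq' hφdom
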